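/- Let n ≥ 0 be an integer and let a, b be integers with b − n > 1 and a + b − n > 2 (so that all series below converge absolutely). Then Z(a, −n, b) = Σ_{j=0}^{n} (−1)^j binom(n, j) · ζ(b−n+j, a−j). -/

import Mathlib

open Complex

noncomputable section

/-- The Tornheim-type double series `Z(a,b,c) = Σ_{α,β ≥ 1} α^{−a} β^{−b} (α+β)^{−c}`. -/
def Ztorn (a b c : ℤ) : ℂ :=
  ∑' p : ℕ+ × ℕ+,
    (((p.1 : ℕ) : ℂ)) ^ (-a) * (((p.2 : ℕ) : ℂ)) ^ (-b) *
      ((((p.1 : ℕ) + (p.2 : ℕ) : ℕ) : ℂ)) ^ (-c)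

/-- The double zeta value `ζ(A,B) = Σ_{l₁>l₂>0} l₁^{−A} l₂^{−B}` (here `B` may be `≤ 0`). -/
def dzeta (A B : ℤ) : ℂ :=
  ∑' p : {q : ℕ × ℕ // 0 < q.2 ∧ q.2 < q.1}, ((p.1.1 : ℕ) : ℂ) ^ (-A) * ((p.1.2 : ℕ) : ℂ) ^ (-B)

lemma aux_ineq (A B : ℤ) (hA : 2 ≤ A) (hAB : 3 ≤ A + B) {x y : ℝ}
    (hy : 1 ≤ y) (hxy : y ≤ x) :
    x ^ (-A) * y ^ (-B) ≤ x ^ (-(3/2 : ℝ)) * y ^ (-(3/2 : ℝ)) := by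
  have hy0 : (0:ℝ) < y := one_pos.trans_le hy
  have hx0 : (0:ℝ) < x := hy0.trans_le hxy
  have hA' : (2:ℝ) ≤ (A : ℝ) := by exact_mod_cast hA
  have hAB' : (3:ℝ) ≤ (A : ℝ) + (B : ℝ) := by exact_mod_cast hAB
  rw [← Real.rpow_intCast x (-A), ← Real.rpow_intCast y (-B)]
  have e1 : (((-A : ℤ)) : ℝ) = (-(3/2 : ℝ)) + ((3/2 : ℝ) - A) := by push_cast; ring
  rw [e1, Real.rpow_add hx0, mul_assoc]
  refine mul_le_mul_of_nonneg_left ?_ (Real.rpow_nonneg hx0.le _)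
  calc x ^ ((3/2:ℝ) - A) * y ^ (((-B : ℤ)) : ℝ)
      ≤ y ^ ((3/2:ℝ) - A) * y ^ (((-B : ℤ)) : ℝ) := by
        refine mul_le_mul_of_nonneg_right
          (Real.rpow_le_rpow_of_nonpos hy0 hxy (by linarith))
          (Real.rpow_nonneg hy0.le _)
    _ = y ^ ((3/2:ℝ) - A + ((-B : ℤ) : ℝ)) := (Real.rpow_add hy0 _ _).symm
    _ ≤ y ^ (-(3/2:ℝ)) := by
        apply Real.rpow_le_rpow_of_exponent_le hy
        push_cast; linarith

lemma dz_summable (A B : ℤ) (hA : 2 ≤ A) (hAB : 3 ≤ A + B) :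
    Summable (fun p : {q : ℕ × ℕ // 0 < q.2 ∧ q.2 < q.1} =>
      ((p.1.1 : ℂ)) ^ (-A) * ((p.1.2 : ℂ)) ^ (-B)) := by
  have hg : Summable (fun n : ℕ => (n:ℝ) ^ (-(3/2) : ℝ)) :=
    Real.summable_nat_rpow.2 (by norm_num)
  have hprod : Summable (fun p : ℕ × ℕ => (p.1:ℝ) ^ (-(3/2):ℝ) * (p.2:ℝ) ^ (-(3/2):ℝ)) :=
    hg.mul_of_nonneg hg (fun n => Real.rpow_nonneg (Nat.cast_nonneg n) _)
      (fun n => Real.rpow_nonneg (Nat.cast_nonneg n) _)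
  refine Summable.of_norm_bounded (hprod.subtype _) ?_
  rintro ⟨⟨l1, l2⟩, h2, h12⟩
  simp only [norm_mul, norm_zpow, Complex.norm_natCast, Function.comp]
  exact aux_ineq A B hA hAB (by exact_mod_cast h2) (by exact_mod_cast h12.le)

def myEquiv : ℕ+ × ℕ+ ≃ {q : ℕ × ℕ // 0 < q.2 ∧ q.2 < q.1} where
  toFun p := ⟨((p.1 : ℕ) + (p.2 : ℕ), (p.1 : ℕ)), p.1.pos, by
    have := p.2.pos; omega⟩
  invFun q := (⟨q.1.2, q.2.1⟩, ⟨q.1.1 - q.1.2, by have := q.2.2; omega⟩)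
  left_inv := by
    rintro ⟨α, β⟩
    refine Prod.ext (Subtype.ext rfl) (Subtype.ext ?_)
    show (α : ℕ) + (β : ℕ) - (α : ℕ) = (β : ℕ)
    omega
  right_inv := by
    rintro ⟨⟨l1, l2⟩, h2, h12⟩
    refine Subtype.ext (Prod.ext ?_ rfl)
    simp
    omega

/-- `Z(a,−n,b) = Σ_{j=0}^n (−1)^j binom(n,j) ζ(b−n+j, a−j)`. -/
theorem statement10
    (n : ℕ) (a b : ℤ) (hb : 1 < b - n) (hab : 2 < a + b - n) :
    Ztorn a (-(n : ℤ)) b =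
      ∑ j ∈ Finset.range (n + 1),
        (-1 : ℂ) ^ j * (n.choose j : ℂ) * dzeta (b - n + j) (a - j) := by
  have hb2 : 2 ≤ b - n := hb
  have hab3 : 3 ≤ a + b - n := hab
  set S := {q : ℕ × ℕ // 0 < q.2 ∧ q.2 < q.1}
  have key : Ztorn a (-(n : ℤ)) b =
      ∑' q : S, ∑ j ∈ Finset.range (n + 1),
        ((-1 : ℂ) ^ j * (n.choose j : ℂ)) *
          (((q.1.1 : ℕ) : ℂ) ^ (-(b - n + j)) * ((q.1.2 : ℕ) : ℂ) ^ (-(a - j))) := by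
    rw [Ztorn, ← Equiv.tsum_eq myEquiv]
    apply tsum_congr
    rintro ⟨α, β⟩
    have hα : (0:ℕ) < α := α.pos
    have hβ : (0:ℕ) < β := β.pos
    have hcα : ((α : ℕ) : ℂ) ≠ 0 := Nat.cast_ne_zero.mpr hα.ne'
    have hcs : (((α : ℕ) + (β : ℕ) : ℕ) : ℂ) ≠ 0 := Nat.cast_ne_zero.mpr (by omega)
    show (((α:ℕ):ℂ)) ^ (-a) * (((β:ℕ):ℂ)) ^ (-(-(n:ℤ))) * ((((α:ℕ)+(β:ℕ):ℕ):ℂ)) ^ (-b) = _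
    rw [neg_neg]
    have hβpow : (((β:ℕ):ℂ)) ^ ((n:ℤ)) =
        ∑ j ∈ Finset.range (n + 1),
          (-(((α:ℕ):ℂ))) ^ j * ((((α:ℕ)+(β:ℕ):ℕ):ℂ)) ^ (n - j) * (n.choose j : ℂ) := by
      have : (((β:ℕ):ℂ)) = -(((α:ℕ):ℂ)) + ((((α:ℕ)+(β:ℕ):ℕ):ℂ)) := by
        push_cast; ring
      rw [zpow_natCast, this, add_pow]
    rw [hβpow, Finset.mul_sum, Finset.sum_mul]
    apply Finset.sum_congr rfl
    intro j hj
    have hjn : j ≤ n := Nat.lt_succ_iff.mp (Finset.mem_range.mp hj)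
    have e2 : (((α:ℕ):ℂ)) ^ (-a) * ((-(((α:ℕ):ℂ))) ^ j * ((((α:ℕ)+(β:ℕ):ℕ):ℂ)) ^ (n - j) *
        (n.choose j : ℂ)) * ((((α:ℕ)+(β:ℕ):ℕ):ℂ)) ^ (-b) =
        ((-1:ℂ) ^ j * (n.choose j : ℂ)) *
          ((((((α:ℕ)+(β:ℕ):ℕ):ℂ)) ^ (((n - j : ℕ) : ℤ)) * ((((α:ℕ)+(β:ℕ):ℕ):ℂ)) ^ (-b)) *
           ((((α:ℕ):ℂ)) ^ ((j : ℤ)) * (((α:ℕ):ℂ)) ^ (-a))) := by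
      rw [neg_pow, zpow_natCast, zpow_natCast]
      ring
    rw [e2, ← zpow_add₀ hcs, ← zpow_add₀ hcα]
    congr 2
    · congr 1
      push_cast [hjn]
      ring
    · congr 1
      ring
  rw [key, Summable.tsum_finsetSum]
  · apply Finset.sum_congr rfl
    intro j _
    rw [tsum_mul_left]
    rfl
  · intro j _
    refine Summable.mul_left _ (dz_summable (b - n + j) (a - j) (by omega) (by omega))
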